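/- Consider the rank-one online contention resolution scheme on ground set [k]: elements arrive in an arbitrary fixed order σ(1),...,σ(k); each element i is independently active with probability z_i, where Σ_i z_i ≤ 1; upon the arrival of an active element σ(t), the scheme selects it (and halts) independently with probability q_t = 1/(2 - Σ_{i=1}^{t-1} z_{σ(i)}). Then for every element i and every arrival order σ, the probability that i is selected, conditioned on i being active, is at least 1/2. -/

import Mathlib

open scoped Classical

open Finset

lemma sum_pair_prod {k : ℕ} (F : Fin k → Bool → Bool → ℝ) :
    (∑ ω : (Fin k → Bool) × (Fin k → Bool), ∏ t, F t (ω.1 t) (ω.2 t))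
      = ∏ t, ∑ p : Bool × Bool, F t p.1 p.2 := by
  rw [Finset.prod_univ_sum (fun _ => (Finset.univ : Finset (Bool × Bool)))
      (fun t p => F t p.1 p.2)]
  rw [Fintype.piFinset_univ]
  exact Fintype.sum_equiv (Equiv.arrowProdEquivProdArrow (Fin k) (fun _ => Bool) (fun _ => Bool)).symm
    (fun ω => ∏ t, F t (ω.1 t) (ω.2 t)) (fun x => ∏ t, F t (x t).1 (x t).2)
    (fun ω => rfl)

lemma telescope (g : ℕ → ℝ) (hb : ∀ n, ∑ m ∈ Finset.range n, g m ≤ 1) :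
    ∀ n, ∏ m ∈ Finset.range n, (1 - g m * (1 / (2 - ∑ j ∈ Finset.range m, g j)))
      = (2 - ∑ m ∈ Finset.range n, g m) / 2 := by
  intro n
  induction n with
  | zero => simp
  | succ n ih =>
    rw [Finset.prod_range_succ, ih, Finset.sum_range_succ]
    have h1 : (0:ℝ) < 2 - ∑ j ∈ Finset.range n, g j := by linarith [hb n]
    field_simp
    ring

/-- 1/2-selectability of the Ezra et al. rank-one OCRS.  The sample space
consists of pairs `ω = (A, Cn)` where `A j` indicates element `j` is active (probability
`z j`, independently) and `Cn t` indicates the scheme's internal coin at arrival step `t`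
comes up heads (probability `q_t = 1/(2 - Σ_{s<t} z_{σ(s)})`, independently).  Element `i`
is selected iff at its arrival step `t` (so `σ t = i`) it is active, its coin is heads,
and no earlier-arriving element was both active with a heads coin.  The probability that
`i` is selected is at least `z i / 2`, i.e. at least `1/2` conditioned on `i` active. -/
theorem ocrs_half_selectable
    (k : ℕ) (z : Fin k → ℝ)
    (hz : ∀ j, z j ∈ Set.Icc (0 : ℝ) 1) (hsum : ∑ j, z j ≤ 1)
    (σ : Equiv.Perm (Fin k)) (i : Fin k) :
    z i / 2 ≤
      ∑ ω : (Fin k → Bool) × (Fin k → Bool),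
        ((∏ j, if ω.1 j then z j else 1 - z j) *
          ∏ t, if ω.2 t then 1 / (2 - ∑ s ∈ Finset.Iio t, z (σ s))
                else 1 - 1 / (2 - ∑ s ∈ Finset.Iio t, z (σ s))) *
        (if ∃ t, σ t = i ∧ ω.1 i = true ∧ ω.2 t = true ∧
              ∀ s < t, ¬(ω.1 (σ s) = true ∧ ω.2 s = true)
          then 1 else 0) := by
  classical
  set q : Fin k → ℝ := fun t => 1 / (2 - ∑ s ∈ Finset.Iio t, z (σ s)) with hq
  set t₀ : Fin k := σ.symm i with ht₀
  have hσt₀ : σ t₀ = i := σ.apply_symm_apply i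
  set F : Fin k → Bool → Bool → ℝ := fun t a c =>
    ((if a then z (σ t) else 1 - z (σ t)) * (if c then q t else 1 - q t)) *
    (if t = t₀ then (if a = true ∧ c = true then 1 else 0)
     else if t < t₀ then (if a = true ∧ c = true then 0 else 1) else 1) with hF
  -- Step A: rewrite each summand as a product indexed by arrival time
  have key : ∀ ω : (Fin k → Bool) × (Fin k → Bool),
      ((∏ j, if ω.1 j then z j else 1 - z j) *
          ∏ t, if ω.2 t then q t else 1 - q t) *
        (if ∃ t, σ t = i ∧ ω.1 i = true ∧ ω.2 t = true ∧
              ∀ s < t, ¬(ω.1 (σ s) = true ∧ ω.2 s = true)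
          then 1 else 0)
      = ∏ t, F t (ω.1 (σ t)) (ω.2 t) := by
    intro ω
    have hA : (∏ j, if ω.1 j then z j else 1 - z j)
        = ∏ t, (if ω.1 (σ t) then z (σ t) else 1 - z (σ t)) :=
      (Equiv.prod_comp σ (fun j => if ω.1 j then z j else 1 - z j)).symm
    have hind : (if ∃ t, σ t = i ∧ ω.1 i = true ∧ ω.2 t = true ∧
          ∀ s < t, ¬(ω.1 (σ s) = true ∧ ω.2 s = true) then (1:ℝ) else 0)
        = ∏ t, (if t = t₀ then (if ω.1 (σ t) = true ∧ ω.2 t = true then (1:ℝ) else 0)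
            else if t < t₀ then (if ω.1 (σ t) = true ∧ ω.2 t = true then 0 else 1) else 1) := by
      by_cases hC : ∃ t, σ t = i ∧ ω.1 i = true ∧ ω.2 t = true ∧
          ∀ s < t, ¬(ω.1 (σ s) = true ∧ ω.2 s = true)
      · rw [if_pos hC]
        obtain ⟨t, hti, h1, h2, h3⟩ := hC
        have htt : t = t₀ := by rw [ht₀, ← hti, Equiv.symm_apply_apply]
        subst htt
        symm
        apply Finset.prod_eq_one
        intro s _
        rcases eq_or_ne s t₀ with hs | hs
        · subst hs
          rw [if_pos rfl, if_pos ⟨by rw [hσt₀]; exact h1, h2⟩]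
        · rw [if_neg hs]
          rcases lt_or_ge s t₀ with hlt | hle
          · rw [if_pos hlt, if_neg (h3 s hlt)]
          · rw [if_neg (not_lt.2 hle)]
      · rw [if_neg hC]
        push_neg at hC
        symm
        by_cases hωi : ω.1 i = true
        · by_cases hωc : ω.2 t₀ = true
          · obtain ⟨s, hs, hcond⟩ := hC t₀ hσt₀ hωi hωc
            refine Finset.prod_eq_zero (Finset.mem_univ s) ?_
            rw [if_neg (ne_of_lt hs), if_pos hs, if_pos hcond]
          · refine Finset.prod_eq_zero (Finset.mem_univ t₀) ?_
            rw [if_pos rfl, if_neg (fun h => hωc h.2)]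
        · refine Finset.prod_eq_zero (Finset.mem_univ t₀) ?_
          rw [if_pos rfl, if_neg (fun h => hωi (by rw [← hσt₀]; exact h.1))]
    rw [hA, hind, ← Finset.prod_mul_distrib, ← Finset.prod_mul_distrib]
  -- Step B: change of variables and factorization
  have hsum1 : (∑ ω : (Fin k → Bool) × (Fin k → Bool), ∏ t, F t (ω.1 (σ t)) (ω.2 t))
      = ∑ ω : (Fin k → Bool) × (Fin k → Bool), ∏ t, F t (ω.1 t) (ω.2 t) :=
    Fintype.sum_equiv
      (Equiv.prodCongr (Equiv.arrowCongr σ.symm (Equiv.refl Bool)) (Equiv.refl _))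
      _ _ (fun ω => rfl)
  -- Step D: evaluate the per-coordinate sums
  have hS : ∀ t, (∑ p : Bool × Bool, F t p.1 p.2) =
      if t = t₀ then z i * q t₀ else if t < t₀ then 1 - z (σ t) * q t else 1 := by
    intro t
    rw [Fintype.sum_prod_type]
    by_cases h1 : t = t₀
    · subst h1
      simp only [hF, if_pos rfl, Fintype.sum_bool, hσt₀]
      simp
    · by_cases h2 : t < t₀
      · simp only [hF, if_neg h1, if_pos h2, Fintype.sum_bool]
        simp
        ring
      · simp only [hF, if_neg h1, if_neg h2, Fintype.sum_bool]
        simp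
        ring
  -- positivity of denominators / bridge to ℕ sums
  set g : ℕ → ℝ := fun m => if h : m < k then z (σ ⟨m, h⟩) else 0 with hg
  have hgval : ∀ s : Fin k, g s.val = z (σ s) := by
    intro s; simp [hg, s.isLt]
  have hbridge : ∀ t : Fin k, (∑ s ∈ Finset.Iio t, z (σ s)) = ∑ m ∈ Finset.range t.val, g m := by
    intro t
    rw [← Nat.Iio_eq_range, ← Fin.map_valEmbedding_Iio, Finset.sum_map]
    exact Finset.sum_congr rfl (fun s _ => (hgval s).symm)
  have hgk : ∑ m ∈ Finset.range k, g m = ∑ j, z j := by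
    rw [← Fin.sum_univ_eq_sum_range]
    rw [Finset.sum_congr rfl (fun s _ => hgval s)]
    exact Equiv.sum_comp σ z
  have hgnn : ∀ m, 0 ≤ g m := by
    intro m; simp only [hg]; split
    · exact (hz _).1
    · exact le_refl 0
  have hb : ∀ n, ∑ m ∈ Finset.range n, g m ≤ 1 := by
    intro n
    calc ∑ m ∈ Finset.range n, g m ≤ ∑ m ∈ Finset.range (max n k), g m :=
          Finset.sum_le_sum_of_subset_of_nonneg
            (Finset.range_subset_range.2 (le_max_left _ _)) (fun m _ _ => hgnn m)
      _ = ∑ m ∈ Finset.range k, g m := by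
          refine (Finset.sum_subset (Finset.range_subset_range.2 (le_max_right _ _)) ?_).symm
          intro m _ hm
          rw [Finset.mem_range, not_lt] at hm
          simp [hg, not_lt.2 hm]
      _ ≤ 1 := hgk ▸ hsum
  have hq' : ∀ t : Fin k, q t = 1 / (2 - ∑ m ∈ Finset.range t.val, g m) := by
    intro t; rw [hq]; simp only [hbridge t]
  -- Final computation
  have final : (∏ t, ∑ p : Bool × Bool, F t p.1 p.2) = z i / 2 := by
    rw [Finset.prod_congr rfl (fun t _ => hS t)]
    rw [← Finset.mul_prod_erase Finset.univ _ (Finset.mem_univ t₀), if_pos rfl]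
    have herase : (∏ t ∈ Finset.univ.erase t₀,
        (if t = t₀ then z i * q t₀ else if t < t₀ then 1 - z (σ t) * q t else 1))
        = ∏ t ∈ Finset.Iio t₀, (1 - z (σ t) * q t) := by
      have hsub : Finset.Iio t₀ ⊆ Finset.univ.erase t₀ :=
        fun x hx => Finset.mem_erase.2 ⟨ne_of_lt (Finset.mem_Iio.1 hx), Finset.mem_univ x⟩
      have hout : ∀ x ∈ Finset.univ.erase t₀, x ∉ Finset.Iio t₀ →
          (if x = t₀ then z i * q t₀ else if x < t₀ then 1 - z (σ x) * q x else 1) = 1 := by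
        intro x hx hx'
        rw [if_neg (Finset.mem_erase.1 hx).1, if_neg (fun h => hx' (Finset.mem_Iio.2 h))]
      rw [← Finset.prod_subset hsub hout]
      exact Finset.prod_congr rfl (fun x hx => by
        rw [Finset.mem_Iio] at hx
        rw [if_neg (ne_of_lt hx), if_pos hx])
    rw [herase]
    have hprodIio : (∏ t ∈ Finset.Iio t₀, (1 - z (σ t) * q t))
        = ∏ m ∈ Finset.range t₀.val, (1 - g m * (1 / (2 - ∑ j ∈ Finset.range m, g j))) := by
      rw [← Nat.Iio_eq_range, ← Fin.map_valEmbedding_Iio, Finset.prod_map]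
      exact Finset.prod_congr rfl (fun s _ => by
        rw [Fin.valEmbedding_apply, hgval s, ← hq' s])
    rw [hprodIio, telescope g hb t₀.val, hq' t₀]
    have hpos : (0:ℝ) < 2 - ∑ m ∈ Finset.range t₀.val, g m := by
      linarith [hb t₀.val]
    field_simp
  refine le_of_eq ?_
  calc z i / 2 = ∏ t, ∑ p : Bool × Bool, F t p.1 p.2 := final.symm
    _ = ∑ ω : (Fin k → Bool) × (Fin k → Bool), ∏ t, F t (ω.1 t) (ω.2 t) :=
        (sum_pair_prod F).symm
    _ = ∑ ω : (Fin k → Bool) × (Fin k → Bool), ∏ t, F t (ω.1 (σ t)) (ω.2 t) := hsum1.symm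
    _ = _ := Finset.sum_congr rfl (fun ω _ => (key ω).symm)
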